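/- Let k ≥ 2 be an integer. If B is a trace-free symmetric k-linear form on V, then the k-linear form J•B defined by (J•B)(v₁,…,v_k) = B(Jv₁, v₂,…,v_k) is again a trace-free symmetric k-linear form and satisfies J•(J•B) = −B; thus B ↦ J•B is a complex structure on the real vector space of trace-free symmetric k-linear forms on V. Moreover this vector space has real dimension 2. -/

import Mathlib

open scoped BigOperators

/-- The real vector space of trace-free symmetric `(n+2)`-linear forms on a real inner
product space `V` with orthonormal basis `e : Fin 2 → V`. -/
noncomputable def traceFreeSymm {V : Type*} [NormedAddCommGroup V] [InnerProductSpace ℝ V]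
    (e : OrthonormalBasis (Fin 2) ℝ V) (n : ℕ) :
    Submodule ℝ (MultilinearMap ℝ (fun _ : Fin (n + 2) => V) ℝ) where
  carrier := {B | (∀ (σ : Equiv.Perm (Fin (n + 2))) (v : Fin (n + 2) → V), B (v ∘ σ) = B v)
    ∧ ∀ v : Fin n → V, ∑ i : Fin 2, B (Fin.cons (e i) (Fin.cons (e i) v)) = 0}
  add_mem' := by
    rintro B C ⟨hB1, hB2⟩ ⟨hC1, hC2⟩
    refine ⟨fun σ v => ?_, fun v => ?_⟩
    · simp only [MultilinearMap.add_apply, hB1 σ v, hC1 σ v]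
    · simp only [MultilinearMap.add_apply, Finset.sum_add_distrib, hB2 v, hC2 v, add_zero]
  zero_mem' := by
    refine ⟨fun σ v => rfl, fun v => ?_⟩
    simp
  smul_mem' := by
    rintro c B ⟨hB1, hB2⟩
    refine ⟨fun σ v => ?_, fun v => ?_⟩
    · simp only [MultilinearMap.smul_apply, hB1 σ v]
    · simp only [MultilinearMap.smul_apply, ← Finset.smul_sum, hB2 v, smul_zero]

namespace TFSAux

/-! ### Counting lemmas -/

def cnt {k : ℕ} (v : Fin k → Fin 2) : ℕ := (Finset.univ.filter (fun i => v i = 0)).card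

lemma cnt_eq_sum {k : ℕ} (v : Fin k → Fin 2) :
    cnt v = ∑ i, if v i = 0 then 1 else 0 := Finset.card_filter _ _

lemma cnt_le {k : ℕ} (v : Fin k → Fin 2) : cnt v ≤ k :=
  (Finset.card_filter_le _ _).trans (by simp)

lemma cnt_comp {k : ℕ} (v : Fin k → Fin 2) (σ : Equiv.Perm (Fin k)) :
    cnt (v ∘ σ) = cnt v := by
  rw [cnt_eq_sum, cnt_eq_sum]
  exact Equiv.sum_comp σ (fun i => if v i = 0 then 1 else 0)

lemma cnt_cons {k : ℕ} (j : Fin 2) (v : Fin k → Fin 2) :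
    cnt (Fin.cons j v) = (if j = 0 then 1 else 0) + cnt v := by
  rw [cnt_eq_sum, cnt_eq_sum, Fin.sum_univ_succ]
  simp [Fin.cons_zero, Fin.cons_succ]

lemma cnt_canonical {k : ℕ} (m : ℕ) (hm : m ≤ k) :
    cnt (fun i : Fin k => if (i : ℕ) < m then 0 else 1) = m := by
  rw [cnt_eq_sum]
  have : ∀ i : Fin k, (if (if (i:ℕ) < m then (0:Fin 2) else 1) = 0 then (1:ℕ) else 0)
      = if (i:ℕ) < m then 1 else 0 := by
    intro i; split <;> simp
  simp only [this]
  rw [Fin.sum_univ_eq_sum_range (fun j => if j < m then (1:ℕ) else 0)]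
  rw [← Finset.card_filter]
  have : Finset.filter (fun j => j < m) (Finset.range k) = Finset.range m := by
    ext j; simp only [Finset.mem_filter, Finset.mem_range]; omega
  simp [this]

lemma lower_mem_iff {k : ℕ} (S : Finset (Fin k))
    (h : ∀ i j : Fin k, j ≤ i → i ∈ S → j ∈ S) (i : Fin k) :
    i ∈ S ↔ (i : ℕ) < S.card := by
  constructor
  · intro hi
    have hsub : Finset.Iic i ⊆ S := fun j hj => h i j (Finset.mem_Iic.mp hj) hi
    have := Finset.card_le_card hsub
    rw [Fin.card_Iic] at this
    omega
  · intro hi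
    by_contra hni
    have hsub : S ⊆ Finset.Iio i := by
      intro j hj
      rw [Finset.mem_Iio]
      by_contra hji
      exact hni (h j i (le_of_not_gt hji) hj)
    have := Finset.card_le_card hsub
    rw [Fin.card_Iio] at this
    omega

lemma mono_canonical {k : ℕ} {u : Fin k → Fin 2} (hu : Monotone u) (i : Fin k) :
    u i = if (i : ℕ) < cnt u then 0 else 1 := by
  have key := lower_mem_iff (Finset.univ.filter (fun i => u i = 0))
    (fun a b hba ha => by
      simp only [Finset.mem_filter, Finset.mem_univ, true_and] at *
      have h2 : u b ≤ u a := hu hba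
      rw [ha] at h2
      exact Fin.le_zero_iff.mp h2) i
  simp only [Finset.mem_filter, Finset.mem_univ, true_and] at key
  change u i = if (i:ℕ) < cnt u then 0 else 1
  split
  · exact key.mpr (by assumption)
  · have h0 : u i ≠ 0 := fun h => (by omega : ¬ (i:ℕ) < cnt u) (key.mp h)
    have h1 : (u i : ℕ) < 2 := (u i).is_lt
    have h2 : (u i : ℕ) ≠ 0 := fun h => h0 (Fin.ext h)
    exact Fin.ext (by omega)

/-! ### The complex-valued product form -/

variable {V : Type*} [NormedAddCommGroup V] [InnerProductSpace ℝ V]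

noncomputable def cMap (e : OrthonormalBasis (Fin 2) ℝ V) : V →ₗ[ℝ] ℂ where
  toFun x := ⟨inner ℝ x (e 0), inner ℝ x (e 1)⟩
  map_add' x y := by simp only [Complex.ext_iff]; constructor <;> simp [inner_add_left]
  map_smul' c x := by
    simp only [Complex.ext_iff]; constructor <;> simp [inner_smul_left, Complex.real_smul]

lemma cMap_basis (e : OrthonormalBasis (Fin 2) ℝ V) (i : Fin 2) :
    cMap e (e i) = if i = 0 then 1 else Complex.I := by
  have h := orthonormal_iff_ite.mp e.orthonormal
  fin_cases i <;> simp [cMap, h, Complex.ext_iff]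

noncomputable def P (e : OrthonormalBasis (Fin 2) ℝ V) (k : ℕ) :
    MultilinearMap ℝ (fun _ : Fin k => V) ℂ :=
  (MultilinearMap.mkPiAlgebra ℝ (Fin k) ℂ).compLinearMap (fun _ => cMap e)

lemma P_apply (e : OrthonormalBasis (Fin 2) ℝ V) (k : ℕ) (v : Fin k → V) :
    P e k v = ∏ i, cMap e (v i) := by
  simp [P]

lemma P_comp_perm (e : OrthonormalBasis (Fin 2) ℝ V) (k : ℕ) (σ : Equiv.Perm (Fin k))
    (v : Fin k → V) : P e k (v ∘ σ) = P e k v := by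
  rw [P_apply, P_apply]
  exact Equiv.prod_comp σ (fun i => cMap e (v i))

lemma P_cons (e : OrthonormalBasis (Fin 2) ℝ V) (k : ℕ) (x : V) (w : Fin k → V) :
    P e (k + 1) (Fin.cons x w) = cMap e x * P e k w := by
  rw [P_apply, P_apply]
  have : (fun i => cMap e ((Fin.cons x w : Fin (k+1) → V) i))
      = (Fin.cons (cMap e x) (fun i => cMap e (w i)) : Fin (k+1) → ℂ) := by
    funext i
    cases i using Fin.cases <;> simp
  rw [this, Fin.prod_cons]

lemma P_trace (e : OrthonormalBasis (Fin 2) ℝ V) (n : ℕ) (w : Fin n → V) :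
    ∑ i : Fin 2, P e (n + 2) (Fin.cons (e i) (Fin.cons (e i) w)) = 0 := by
  rw [Fin.sum_univ_two]
  rw [P_cons, P_cons, P_cons, P_cons, cMap_basis, cMap_basis]
  norm_num
  rw [← mul_assoc, Complex.I_mul_I]
  ring

noncomputable def ReP (e : OrthonormalBasis (Fin 2) ℝ V) (k : ℕ) :
    MultilinearMap ℝ (fun _ : Fin k => V) ℝ :=
  Complex.reLm.compMultilinearMap (P e k)

noncomputable def ImP (e : OrthonormalBasis (Fin 2) ℝ V) (k : ℕ) :
    MultilinearMap ℝ (fun _ : Fin k => V) ℝ :=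
  Complex.imLm.compMultilinearMap (P e k)

lemma ReP_apply (e : OrthonormalBasis (Fin 2) ℝ V) (k : ℕ) (v : Fin k → V) :
    ReP e k v = (P e k v).re := rfl

lemma ImP_apply (e : OrthonormalBasis (Fin 2) ℝ V) (k : ℕ) (v : Fin k → V) :
    ImP e k v = (P e k v).im := rfl

lemma ReP_mem (e : OrthonormalBasis (Fin 2) ℝ V) (n : ℕ) :
    ReP e (n + 2) ∈ traceFreeSymm e n := by
  constructor
  · intro σ v
    rw [ReP_apply, ReP_apply, P_comp_perm]
  · intro w
    have h := P_trace e n w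
    have h2 : (∑ i : Fin 2, P e (n+2) (Fin.cons (e i) (Fin.cons (e i) w))).re = 0 := by
      rw [h]; rfl
    rw [Complex.re_sum] at h2
    exact h2

lemma ImP_mem (e : OrthonormalBasis (Fin 2) ℝ V) (n : ℕ) :
    ImP e (n + 2) ∈ traceFreeSymm e n := by
  constructor
  · intro σ v
    rw [ImP_apply, ImP_apply, P_comp_perm]
  · intro w
    have h := P_trace e n w
    have h2 : (∑ i : Fin 2, P e (n+2) (Fin.cons (e i) (Fin.cons (e i) w))).im = 0 := by
      rw [h]; rfl
    rw [Complex.im_sum] at h2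
    exact h2

lemma P_canon_top (e : OrthonormalBasis (Fin 2) ℝ V) (k : ℕ) :
    P e k (fun i : Fin k => e (if (i:ℕ) < k then 0 else 1)) = 1 := by
  rw [P_apply]
  have h : ∀ i : Fin k, cMap e (e (if (i:ℕ) < k then 0 else 1)) = 1 := by
    intro i; rw [if_pos i.is_lt, cMap_basis]; simp
  rw [Finset.prod_congr rfl (fun i _ => h i)]
  simp

lemma P_canon_pred (e : OrthonormalBasis (Fin 2) ℝ V) (n : ℕ) :
    P e (n+2) (fun i : Fin (n+2) => e (if (i:ℕ) < n+1 then 0 else 1)) = Complex.I := by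
  rw [P_apply]
  rw [Finset.prod_eq_single (Fin.last (n+1))]
  · rw [if_neg (by simp [Fin.val_last]), cMap_basis]
    simp
  · intro b _ hb
    have hlt : (b:ℕ) < n + 1 := by
      have h1 := b.is_lt
      have hne : (b:ℕ) ≠ n+1 := fun hh => hb (Fin.ext (by simp [Fin.val_last, hh]))
      omega
    rw [if_pos hlt, cMap_basis]; simp
  · simp

/-! ### Values of symmetric forms are determined by counts -/

lemma symm_value {k : ℕ} (e : OrthonormalBasis (Fin 2) ℝ V)
    (B : MultilinearMap ℝ (fun _ : Fin k => V) ℝ)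
    (hs : ∀ (σ : Equiv.Perm (Fin k)) (v : Fin k → V), B (v ∘ σ) = B v)
    (v : Fin k → Fin 2) :
    B (fun i => e (v i)) = B (fun i => e (if (i : ℕ) < cnt v then 0 else 1)) := by
  have hmono : Monotone (v ∘ Tuple.sort v) := Tuple.monotone_sort v
  rw [← hs (Tuple.sort v) (fun i => e (v i))]
  congr 1
  funext i
  show e (v (Tuple.sort v i)) = _
  have h := mono_canonical hmono i
  rw [cnt_comp] at h
  rw [show v (Tuple.sort v i) = (v ∘ Tuple.sort v) i from rfl, h]

lemma cons_cons_eq (e : OrthonormalBasis (Fin 2) ℝ V) {n : ℕ} (j : Fin 2) (u : Fin n → Fin 2) :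
    (Fin.cons (e j) (Fin.cons (e j) (fun i => e (u i))) : Fin (n+2) → V)
      = fun i => e ((Fin.cons j (Fin.cons j u) : Fin (n+2) → Fin 2) i) := by
  funext i
  cases i using Fin.cases with
  | zero => simp
  | succ i' => cases i' using Fin.cases <;> simp

lemma t_rec (e : OrthonormalBasis (Fin 2) ℝ V) {n : ℕ}
    (B : MultilinearMap ℝ (fun _ : Fin (n+2) => V) ℝ)
    (hs : ∀ (σ : Equiv.Perm (Fin (n + 2))) (v : Fin (n + 2) → V), B (v ∘ σ) = B v)
    (ht : ∀ v : Fin n → V, ∑ i : Fin 2, B (Fin.cons (e i) (Fin.cons (e i) v)) = 0)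
    (m : ℕ) (hm : m ≤ n) :
    B (fun i : Fin (n+2) => e (if (i : ℕ) < m then 0 else 1))
      = - B (fun i : Fin (n+2) => e (if (i : ℕ) < m + 2 then 0 else 1)) := by
  set u : Fin n → Fin 2 := fun i => if (i : ℕ) < m then 0 else 1 with hu
  have hcu : cnt u = m := cnt_canonical m hm
  have h := ht (fun i => e (u i))
  have c0 : cnt (Fin.cons (0:Fin 2) (Fin.cons (0:Fin 2) u) : Fin (n+2) → Fin 2) = m + 2 := by
    rw [cnt_cons, cnt_cons, hcu]; norm_num; omega
  have c1 : cnt (Fin.cons (1:Fin 2) (Fin.cons (1:Fin 2) u) : Fin (n+2) → Fin 2) = m := by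
    rw [cnt_cons, cnt_cons, hcu]; norm_num
  have e0 : B (fun i => e ((Fin.cons 0 (Fin.cons 0 u) : Fin (n+2) → Fin 2) i))
      = B (fun i : Fin (n+2) => e (if (i:ℕ) < m + 2 then 0 else 1)) := by
    rw [symm_value e B hs, c0]
  have e1 : B (fun i => e ((Fin.cons 1 (Fin.cons 1 u) : Fin (n+2) → Fin 2) i))
      = B (fun i : Fin (n+2) => e (if (i:ℕ) < m then 0 else 1)) := by
    rw [symm_value e B hs, c1]
  rw [Fin.sum_univ_two, cons_cons_eq e 0 u, cons_cons_eq e 1 u, e0, e1] at h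
  linarith

lemma decomp (e : OrthonormalBasis (Fin 2) ℝ V) {n : ℕ}
    (B : MultilinearMap ℝ (fun _ : Fin (n+2) => V) ℝ)
    (hB : B ∈ traceFreeSymm e n) :
    B = B (fun i : Fin (n+2) => e (if (i:ℕ) < n+2 then 0 else 1)) • ReP e (n+2)
      + B (fun i : Fin (n+2) => e (if (i:ℕ) < n+1 then 0 else 1)) • ImP e (n+2) := by
  obtain ⟨hs, ht⟩ := hB
  have hRmem : B (fun i : Fin (n+2) => e (if (i:ℕ) < n+2 then 0 else 1)) • ReP e (n+2)
      + B (fun i : Fin (n+2) => e (if (i:ℕ) < n+1 then 0 else 1)) • ImP e (n+2)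
      ∈ traceFreeSymm e n :=
    Submodule.add_mem _ (Submodule.smul_mem _ _ (ReP_mem e n))
      (Submodule.smul_mem _ _ (ImP_mem e n))
  obtain ⟨hsR, htR⟩ := hRmem
  set R := B (fun i : Fin (n+2) => e (if (i:ℕ) < n+2 then 0 else 1)) • ReP e (n+2)
      + B (fun i : Fin (n+2) => e (if (i:ℕ) < n+1 then 0 else 1)) • ImP e (n+2) with hRdef
  have hRtop : R (fun i : Fin (n+2) => e (if (i:ℕ) < n+2 then 0 else 1))
      = B (fun i : Fin (n+2) => e (if (i:ℕ) < n+2 then 0 else 1)) := by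
    rw [hRdef]
    simp only [MultilinearMap.add_apply, MultilinearMap.smul_apply, ReP_apply, ImP_apply,
      P_canon_top, smul_eq_mul]
    simp
  have hRpred : R (fun i : Fin (n+2) => e (if (i:ℕ) < n+1 then 0 else 1))
      = B (fun i : Fin (n+2) => e (if (i:ℕ) < n+1 then 0 else 1)) := by
    rw [hRdef]
    simp only [MultilinearMap.add_apply, MultilinearMap.smul_apply, ReP_apply, ImP_apply,
      P_canon_pred, smul_eq_mul]
    simp
  have key : ∀ j : ℕ, j ≤ n + 2 →
      B (fun i : Fin (n+2) => e (if (i:ℕ) < n+2-j then 0 else 1))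
        = R (fun i : Fin (n+2) => e (if (i:ℕ) < n+2-j then 0 else 1)) := by
    intro j
    induction j using Nat.strong_induction_on with
    | _ j IH =>
      match j with
      | 0 => intro _; simpa using hRtop.symm
      | 1 => intro _; simpa using hRpred.symm
      | (j+2) =>
        intro hj
        have hjn : j ≤ n := by omega
        have hmn : n + 2 - (j + 2) ≤ n := by omega
        rw [t_rec e B hs ht _ hmn, t_rec e R hsR htR _ hmn]
        have harith : n + 2 - (j + 2) + 2 = n + 2 - j := by omega
        rw [harith]
        rw [IH j (by omega) (by omega)]
  apply Module.Basis.ext_multilinear (fun _ => e.toBasis)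
  intro v
  simp only [OrthonormalBasis.coe_toBasis]
  rw [symm_value e B hs v, symm_value e R hsR v]
  have hcle := cnt_le v
  have h := key (n + 2 - cnt v) (by omega)
  rwa [show n + 2 - (n + 2 - cnt v) = cnt v by omega] at h

end TFSAux

open TFSAux

theorem stmt4 {V : Type*} [NormedAddCommGroup V] [InnerProductSpace ℝ V]
    (e : OrthonormalBasis (Fin 2) ℝ V) (J : V →ₗ[ℝ] V)
    (hJ2 : ∀ x : V, J (J x) = -x)
    (hJinner : ∀ x y : V, (inner ℝ (J x) (J y) : ℝ) = inner ℝ x y)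
    (n : ℕ)
    (B : MultilinearMap ℝ (fun _ : Fin (n + 2) => V) ℝ)
    (hB : B ∈ traceFreeSymm e n) :
    (∃ JB : MultilinearMap ℝ (fun _ : Fin (n + 2) => V) ℝ,
      (∀ v : Fin (n + 2) → V, JB v = B (Function.update v 0 (J (v 0))))
      ∧ JB ∈ traceFreeSymm e n
      ∧ (∀ v : Fin (n + 2) → V, JB (Function.update v 0 (J (v 0))) = - B v))
    ∧ Module.finrank ℝ (traceFreeSymm e n) = 2 := by
  classical
  have horth := orthonormal_iff_ite.mp e.orthonormal
  set ε : ℝ := inner ℝ (J (e 0)) (e 1) with hεdef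
  have hskew : ∀ x y : V, (inner ℝ (J x) y : ℝ) = -inner ℝ x (J y) := by
    intro x y
    have h1 := hJinner x (J y)
    rw [hJ2 y, inner_neg_right] at h1
    linarith
  have hJe0 : J (e 0) = ε • e 1 := by
    have hx := (e.sum_repr' (J (e 0))).symm
    rw [Fin.sum_univ_two] at hx
    have h00 : (inner ℝ (e 0) (J (e 0)) : ℝ) = 0 := by
      have h1 := hskew (e 0) (e 0)
      have hc := real_inner_comm (e 0) (J (e 0))
      linarith
    rw [h00, zero_smul, zero_add] at hx
    rw [hx, real_inner_comm]
  have hε2 : ε * ε = 1 := by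
    have h := hJinner (e 0) (e 0)
    rw [hJe0, real_inner_smul_left, real_inner_smul_right] at h
    have h1 : (inner ℝ (e 1) (e 1) : ℝ) = 1 := by simpa using horth 1 1
    have h0 : (inner ℝ (e 0) (e 0) : ℝ) = 1 := by simpa using horth 0 0
    rw [h1, h0, mul_one] at h
    exact h
  have hJe1 : J (e 1) = -(ε • e 0) := by
    have h := hJ2 (e 0)
    rw [hJe0, map_smul] at h
    calc J (e 1) = (ε * ε) • J (e 1) := by rw [hε2, one_smul]
      _ = ε • (ε • J (e 1)) := (smul_smul ε ε _).symm
      _ = ε • (-(e 0)) := by rw [h]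
      _ = -(ε • e 0) := smul_neg ε _
  have hcJ : ∀ x : V, cMap e (J x) = (ε : ℂ) * (Complex.I * cMap e x) := by
    intro x
    rw [Complex.ext_iff]
    constructor
    · show (inner ℝ (J x) (e 0) : ℝ) = _
      rw [hskew, hJe0, real_inner_smul_right]
      simp [cMap, Complex.mul_re]
    · show (inner ℝ (J x) (e 1) : ℝ) = _
      rw [hskew, hJe1, inner_neg_right, real_inner_smul_right]
      simp [cMap, Complex.mul_im]
  -- the family of linear maps applying J in the first slot
  set Lf : Fin (n+2) → V →ₗ[ℝ] V := fun i => if i = 0 then J else LinearMap.id with hLfdef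
  have hLf0 : Lf 0 = J := if_pos rfl
  have hLfs : ∀ i : Fin (n+1), Lf i.succ = LinearMap.id := fun i => if_neg (Fin.succ_ne_zero i)
  have hLfv : ∀ v : Fin (n+2) → V, (fun i => Lf i (v i)) = Function.update v 0 (J (v 0)) := by
    intro v; funext i
    by_cases h : i = 0
    · subst h; rw [hLf0, Function.update_self]
    · rw [Function.update_of_ne h]
      have hid : Lf i = LinearMap.id := if_neg h
      rw [hid]; rfl
  have hPJ : (P e (n+2)).compLinearMap Lf = ((ε : ℂ) * Complex.I) • P e (n+2) := by
    apply MultilinearMap.ext; intro v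
    rw [MultilinearMap.compLinearMap_apply, MultilinearMap.smul_apply, P_apply, P_apply,
      Fin.prod_univ_succ (fun i => cMap e (Lf i (v i))),
      Fin.prod_univ_succ (fun i => cMap e (v i))]
    rw [hLf0]
    simp only [hLfs, LinearMap.id_coe, id_eq]
    rw [hcJ]
    rw [smul_eq_mul]
    ring
  have hReJ : (ReP e (n+2)).compLinearMap Lf = (-ε) • ImP e (n+2) := by
    apply MultilinearMap.ext; intro v
    have h := DFunLike.congr_fun hPJ v
    rw [MultilinearMap.compLinearMap_apply, MultilinearMap.smul_apply, smul_eq_mul] at h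
    rw [MultilinearMap.compLinearMap_apply, MultilinearMap.smul_apply, ReP_apply, ImP_apply,
      smul_eq_mul, h]
    simp [Complex.mul_re]
  have hImJ : (ImP e (n+2)).compLinearMap Lf = ε • ReP e (n+2) := by
    apply MultilinearMap.ext; intro v
    have h := DFunLike.congr_fun hPJ v
    rw [MultilinearMap.compLinearMap_apply, MultilinearMap.smul_apply, smul_eq_mul] at h
    rw [MultilinearMap.compLinearMap_apply, MultilinearMap.smul_apply, ImP_apply, ReP_apply,
      smul_eq_mul, h]
    simp [Complex.mul_im]
  obtain ⟨hs, ht⟩ := hB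
  have hBdec := decomp e B ⟨hs, ht⟩
  set a₀ := B (fun i : Fin (n+2) => e (if (i:ℕ) < n+2 then 0 else 1)) with ha₀
  set a₁ := B (fun i : Fin (n+2) => e (if (i:ℕ) < n+1 then 0 else 1)) with ha₁
  set JB := B.compLinearMap Lf with hJBdef
  have hJBform : JB = (ε * a₁) • ReP e (n+2) + (-ε * a₀) • ImP e (n+2) := by
    apply MultilinearMap.ext; intro v
    have h1 := DFunLike.congr_fun hReJ v
    have h2 := DFunLike.congr_fun hImJ v
    rw [MultilinearMap.compLinearMap_apply, MultilinearMap.smul_apply, smul_eq_mul] at h1 h2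
    rw [hJBdef, MultilinearMap.compLinearMap_apply, hBdec]
    simp only [MultilinearMap.add_apply, MultilinearMap.smul_apply, smul_eq_mul]
    rw [h1, h2]
    ring
  have hJBmem : JB ∈ traceFreeSymm e n := by
    rw [hJBform]
    exact Submodule.add_mem _ (Submodule.smul_mem _ _ (ReP_mem e n))
      (Submodule.smul_mem _ _ (ImP_mem e n))
  constructor
  · refine ⟨JB, fun v => ?_, hJBmem, fun v => ?_⟩
    · rw [hJBdef, MultilinearMap.compLinearMap_apply, hLfv]
    · rw [← hLfv v, hJBdef, MultilinearMap.compLinearMap_apply]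
      have hLL : (fun i => Lf i (Lf i (v i))) = Function.update v 0 (-(v 0)) := by
        funext i
        by_cases h : i = 0
        · subst h; rw [hLf0, hJ2, Function.update_self]
        · rw [Function.update_of_ne h]
          have hid : Lf i = LinearMap.id := if_neg h
          rw [hid]; rfl
      rw [hLL]
      have hneg := B.map_update_neg v 0 (v 0)
      rwa [Function.update_eq_self] at hneg
  · have hspan : traceFreeSymm e n
        = Submodule.span ℝ {ReP e (n+2), ImP e (n+2)} := by
      apply le_antisymm
      · intro C hC
        exact Submodule.mem_span_pair.mpr ⟨_, _, (decomp e C hC).symm⟩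
      · rw [Submodule.span_le]
        rintro x hx
        rcases hx with rfl | hx
        · exact ReP_mem e n
        · rw [Set.mem_singleton_iff] at hx
          subst hx
          exact ImP_mem e n
    have hli : LinearIndependent ℝ ![ReP e (n+2), ImP e (n+2)] := by
      rw [LinearIndependent.pair_iff]
      intro s t hst
      have h0 := DFunLike.congr_fun hst (fun i : Fin (n+2) => e (if (i:ℕ) < n+2 then 0 else 1))
      have h1 := DFunLike.congr_fun hst (fun i : Fin (n+2) => e (if (i:ℕ) < n+1 then 0 else 1))
      rw [MultilinearMap.add_apply, MultilinearMap.smul_apply, MultilinearMap.smul_apply,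
        MultilinearMap.zero_apply, ReP_apply, ImP_apply, P_canon_top] at h0
      rw [MultilinearMap.add_apply, MultilinearMap.smul_apply, MultilinearMap.smul_apply,
        MultilinearMap.zero_apply, ReP_apply, ImP_apply, P_canon_pred] at h1
      simp only [Complex.one_re, Complex.one_im, Complex.I_re, Complex.I_im,
        smul_eq_mul, mul_one, mul_zero] at h0 h1
      constructor <;> linarith
    have hrange : ({ReP e (n+2), ImP e (n+2)} : Set (MultilinearMap ℝ (fun _ : Fin (n+2) => V) ℝ))
        = Set.range ![ReP e (n+2), ImP e (n+2)] := by
      ext z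
      simp only [Set.mem_insert_iff, Set.mem_singleton_iff, Set.mem_range,
        Fin.exists_fin_two, Matrix.cons_val_zero, Matrix.cons_val_one, Matrix.head_cons, eq_comm]
    rw [hspan, hrange, finrank_span_eq_card hli, Fintype.card_fin]
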